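/- Let N, n be positive natural numbers, κ : ℝ, A, W, P : Matrix (Fin n) (Fin n) ℝ with P invertible and symmetric, W positive semidefinite, G_i : Fin N → Matrix (Fin n) (Fin n) ℝ with each G_i i symmetric positive semidefinite, G = ∑ i, G_i i, and Q : Matrix (Fin N) (Fin N) ℝ symmetric. With D = -P⁻¹ * A - Aᵀ * P⁻¹ - P⁻¹ * W * P⁻¹ + G, A* = blockDiag (fun i => A - (N : ℝ) • (P * G_i i)) - κ • (Q ⊗ₖ P), and 𝒩 = (1 : Matrix (Fin N) (Fin N) ℝ) ⊗ₖ P⁻¹, the matrix ((1 : Matrix (Fin N) (Fin N) ℝ) ⊗ₖ G - (2 * κ) • (Q ⊗ₖ (1 : Matrix (Fin n) (Fin n) ℝ))) - ((1 : Matrix (Fin N) (Fin N) ℝ) ⊗ₖ D + 𝒩 * A* + A*ᵀ * 𝒩) is positive semidefinite. -/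

import Mathlib

open Matrix Kronecker BigOperators

/-- Block-diagonal matrix indexed by `Fin N × Fin n` with diagonal blocks `G i`. -/
def blockDiag {N n : ℕ} (G : Fin N → Matrix (Fin n) (Fin n) ℝ) :
    Matrix (Fin N × Fin n) (Fin N × Fin n) ℝ :=
  Matrix.of fun p q => if p.1 = q.1 then G p.1 p.2 q.2 else 0

lemma bd_apply {N n : ℕ} (G : Fin N → Matrix (Fin n) (Fin n) ℝ)
    (i j : Fin N) (k l : Fin n) :
    _root_.blockDiag G (i,k) (j,l) = if i = j then G i k l else 0 := rfl

lemma bd_ext {N n : ℕ} {G H : Fin N → Matrix (Fin n) (Fin n) ℝ}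
    (h : ∀ i, G i = H i) : _root_.blockDiag G = _root_.blockDiag H := by
  ext ⟨i,k⟩ ⟨j,l⟩
  simp [bd_apply, h i]

lemma bd_mul {N n : ℕ} (G H : Fin N → Matrix (Fin n) (Fin n) ℝ) :
    _root_.blockDiag G * _root_.blockDiag H = _root_.blockDiag (fun i => G i * H i) := by
  ext ⟨i,k⟩ ⟨j,l⟩
  simp only [bd_apply, Matrix.mul_apply, Fintype.sum_prod_type, ite_mul, mul_ite,
    zero_mul, mul_zero, Finset.sum_ite_eq, Finset.sum_ite_eq', Finset.mem_univ, if_true]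
  rcases eq_or_ne i j with h | h
  · subst h; simp
  · simp [h]

lemma one_kron {N n : ℕ} (B : Matrix (Fin n) (Fin n) ℝ) :
    (1 : Matrix (Fin N) (Fin N) ℝ) ⊗ₖ B = _root_.blockDiag (fun _ => B) := by
  ext ⟨i,k⟩ ⟨j,l⟩
  simp [bd_apply, Matrix.one_apply, ite_mul, kroneckerMap_apply]

lemma bd_transpose {N n : ℕ} (G : Fin N → Matrix (Fin n) (Fin n) ℝ) :
    (_root_.blockDiag G)ᵀ = _root_.blockDiag (fun i => (G i)ᵀ) := by
  ext ⟨i,k⟩ ⟨j,l⟩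
  simp only [transpose_apply, bd_apply]
  rcases eq_or_ne i j with h | h
  · subst h; simp
  · simp [h, Ne.symm h]

lemma bd_posSemidef {N n : ℕ} {H : Fin N → Matrix (Fin n) (Fin n) ℝ}
    (h : ∀ i, (H i).PosSemidef) : (_root_.blockDiag H).PosSemidef := by
  rw [posSemidef_iff_dotProduct_mulVec]
  constructor
  · have e : (_root_.blockDiag H)ᵀ = _root_.blockDiag H := by
      rw [bd_transpose]
      exact bd_ext fun i => (h i).1
    simpa [Matrix.IsHermitian, conjTranspose_eq_transpose_of_trivial] using e
  · intro x
    have key : star x ⬝ᵥ _root_.blockDiag H *ᵥ x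
        = ∑ i, star (fun k => x (i,k)) ⬝ᵥ (H i) *ᵥ (fun k => x (i,k)) := by
      simp [dotProduct, mulVec, bd_apply, Fintype.sum_prod_type, ite_mul, mul_ite,
        Finset.sum_ite_eq, Finset.sum_ite_eq', Finset.mul_sum]
    rw [key]
    exact Finset.sum_nonneg fun i _ => (h i).dotProduct_mulVec_nonneg _

theorem stmt8 {N n : ℕ} (hN : 0 < N) (hn : 0 < n) (κ : ℝ)
    (A W P : Matrix (Fin n) (Fin n) ℝ) (hP : IsUnit P) (hPsym : Pᵀ = P)
    (hW : W.PosSemidef)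
    (G_i : Fin N → Matrix (Fin n) (Fin n) ℝ)
    (hGisym : ∀ i, (G_i i)ᵀ = G_i i) (hGipsd : ∀ i, (G_i i).PosSemidef)
    (G : Matrix (Fin n) (Fin n) ℝ) (hG : G = ∑ i, G_i i)
    (Q : Matrix (Fin N) (Fin N) ℝ) (hQsym : Qᵀ = Q)
    (D : Matrix (Fin n) (Fin n) ℝ)
    (hD : D = -P⁻¹ * A - Aᵀ * P⁻¹ - P⁻¹ * W * P⁻¹ + G)
    (Astar 𝒩 : Matrix (Fin N × Fin n) (Fin N × Fin n) ℝ)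
    (hAstar : Astar = blockDiag (fun i => A - (N : ℝ) • (P * G_i i)) - κ • (Q ⊗ₖ P))
    (h𝒩 : 𝒩 = (1 : Matrix (Fin N) (Fin N) ℝ) ⊗ₖ P⁻¹) :
    (((1 : Matrix (Fin N) (Fin N) ℝ) ⊗ₖ G
        - (2 * κ) • (Q ⊗ₖ (1 : Matrix (Fin n) (Fin n) ℝ)))
      - ((1 : Matrix (Fin N) (Fin N) ℝ) ⊗ₖ D + 𝒩 * Astar + Astarᵀ * 𝒩)).PosSemidef := by
  have hdet : IsUnit P.det := (Matrix.isUnit_iff_isUnit_det P).mp hP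
  have hPiP : P⁻¹ * P = 1 := Matrix.nonsing_inv_mul P hdet
  have hPPi : P * P⁻¹ = 1 := Matrix.mul_nonsing_inv P hdet
  have hPinvT : P⁻¹ᵀ = P⁻¹ := by
    rw [Matrix.transpose_nonsing_inv, hPsym]
  -- 𝒩 * Astar
  have h1 : 𝒩 * Astar
      = _root_.blockDiag (fun i => P⁻¹ * A - (N : ℝ) • G_i i)
        - κ • (Q ⊗ₖ (1 : Matrix (Fin n) (Fin n) ℝ)) := by
    rw [hAstar, h𝒩, mul_sub, mul_smul_comm, ← Matrix.mul_kronecker_mul, one_mul, hPiP]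
    congr 1
    rw [one_kron, bd_mul]
    exact bd_ext fun i => by
      rw [mul_sub, mul_smul_comm, ← mul_assoc, hPiP, one_mul]
  -- Astarᵀ * 𝒩
  have h2 : Astarᵀ * 𝒩
      = _root_.blockDiag (fun i => Aᵀ * P⁻¹ - (N : ℝ) • G_i i)
        - κ • (Q ⊗ₖ (1 : Matrix (Fin n) (Fin n) ℝ)) := by
    rw [hAstar, h𝒩, transpose_sub, transpose_smul, sub_mul, smul_mul_assoc,
      ← Matrix.kroneckerMap_transpose, hPsym, hQsym, ← Matrix.mul_kronecker_mul,
      mul_one, hPPi]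
    congr 1
    rw [bd_transpose, one_kron, bd_mul]
    exact bd_ext fun i => by
      rw [transpose_sub, transpose_smul, transpose_mul, hGisym, hPsym, sub_mul,
        smul_mul_assoc, mul_assoc, hPPi, mul_one]
  have key : ((1 : Matrix (Fin N) (Fin N) ℝ) ⊗ₖ G
        - (2 * κ) • (Q ⊗ₖ (1 : Matrix (Fin n) (Fin n) ℝ)))
      - ((1 : Matrix (Fin N) (Fin N) ℝ) ⊗ₖ D + 𝒩 * Astar + Astarᵀ * 𝒩)
      = _root_.blockDiag (fun i => P⁻¹ * W * P⁻¹ + ((2 : ℝ) * N) • G_i i) := by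
    rw [h1, h2, one_kron G, one_kron D, hD]
    ext ⟨i, k⟩ ⟨j, l⟩
    simp only [Matrix.sub_apply, Matrix.add_apply, Matrix.smul_apply, bd_apply, kroneckerMap_apply,
      one_apply, smul_eq_mul, Matrix.neg_mul, Matrix.neg_apply, Matrix.sub_apply,
      Matrix.add_apply]
    rcases eq_or_ne i j with h | h
    · subst h; rcases eq_or_ne k l with h' | h' <;> simp [h'] <;> ring
    · rcases eq_or_ne k l with h' | h' <;> simp [h, h'] <;> ring
  rw [key]
  refine bd_posSemidef fun i => Matrix.PosSemidef.add ?_ ?_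
  · have := hW.mul_mul_conjTranspose_same P⁻¹ᵀ
    simpa [conjTranspose_eq_transpose_of_trivial, hPinvT] using this
  · refine .of_dotProduct_mulVec_nonneg ?_ fun x => ?_
    · have := (hGipsd i).1
      simpa [Matrix.IsHermitian] using congrArg (fun M => ((2:ℝ) * N) • M) this
    · rw [Matrix.smul_mulVec, dotProduct_smul, smul_eq_mul]
      exact mul_nonneg (by positivity) ((hGipsd i).dotProduct_mulVec_nonneg x)
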